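/- Let a_0, …, a_n ∈ ℂ be pairwise distinct and nonzero, let h(z) := ∏_{k=0}^{n} (z − a_k), and define π(u,v,z) := (½(|u|² − |v|²), |z|). Fix 1 ≤ i ≤ n, assume |a_{i−1}| ≤ |a_i|, and let c ⊆ ℂ be a compact connected set with a_{i−1} ∈ c, a_i ∈ c, and |a_{i−1}| ≤ |z| ≤ |a_i| for every z ∈ c. Define L_c := {(u,v,z) ∈ ℂ³ : u·v = h(z), |u| = |v|, z ∈ c}. Then π(L_c) = {0} × [|a_{i−1}|, |a_i|]. -/

import Mathlib

/-- For `h(z) = ∏ (z − a k)` with the `a k` pairwise distinct and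
nonzero, the Lagrangian fibration `π(u,v,z) = (½(|u|²−|v|²), |z|)` maps the
Khovanov–Seidel Lagrangian sphere `L_c = {uv = h(z), |u| = |v|, z ∈ c}` over a matching
curve `c` joining `a (i−1)` and `a i` (with `|a (i−1)| ≤ |z| ≤ |a i|` on `c`) onto the
segment `{0} × [|a (i−1)|, |a i|]`. -/
theorem lagrangian_sphere_image (n : ℕ) (a : Fin (n+1) → ℂ)
    (ha : Function.Injective a) (ha0 : ∀ k, a k ≠ 0)
    (i : ℕ) (hi1 : 1 ≤ i) (hi2 : i ≤ n)
    (hle : ‖a ⟨i-1, by omega⟩‖ ≤ ‖a ⟨i, by omega⟩‖)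
    (c : Set ℂ) (hcpt : IsCompact c) (hconn : IsConnected c)
    (hmem1 : a ⟨i-1, by omega⟩ ∈ c) (hmem2 : a ⟨i, by omega⟩ ∈ c)
    (hmod : ∀ z ∈ c, ‖a ⟨i-1, by omega⟩‖ ≤ ‖z‖ ∧
      ‖z‖ ≤ ‖a ⟨i, by omega⟩‖) :
    (fun w : ℂ × ℂ × ℂ =>
        ((1/2) * ((‖w.1‖)^2 - (‖w.2.1‖)^2), ‖w.2.2‖)) ''
      {w : ℂ × ℂ × ℂ | w.1 * w.2.1 = ∏ k, (w.2.2 - a k) ∧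
        ‖w.1‖ = ‖w.2.1‖ ∧ w.2.2 ∈ c}
    = {(0:ℝ)} ×ˢ Set.Icc (‖a ⟨i-1, by omega⟩‖)
        (‖a ⟨i, by omega⟩‖) := by
  ext ⟨x, r⟩
  simp only [Set.mem_image, Set.mem_setOf_eq, Set.mem_prod, Set.mem_singleton_iff,
    Set.mem_Icc, Prod.mk.injEq, Prod.exists]
  constructor
  · rintro ⟨u, v, z, ⟨heq, habs, hz⟩, hx, hr⟩
    refine ⟨by rw [← hx, habs]; ring, ?_, ?_⟩
    · rw [← hr]; exact (hmod z hz).1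
    · rw [← hr]; exact (hmod z hz).2
  · rintro ⟨hx, hr1, hr2⟩
    obtain ⟨z, hz, hzr⟩ := hconn.isPreconnected.intermediate_value hmem1 hmem2
      (continuous_norm.continuousOn) (Set.mem_Icc.mpr ⟨hr1, hr2⟩)
    set w := ∏ k, (z - a k) with hw
    set u : ℂ := (Real.sqrt ‖w‖ : ℂ) with hu
    have habsu : ‖u‖ = Real.sqrt ‖w‖ := by
      rw [hu, Complex.norm_real, Real.norm_of_nonneg (Real.sqrt_nonneg _)]
    have habs : ‖u‖ = ‖w / u‖ := by
      by_cases h : w = 0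
      · simp [hu, h]
      · have hu0 : ‖u‖ ≠ 0 := by
          rw [habsu]
          exact (Real.sqrt_pos.mpr (norm_pos_iff.mpr h)).ne'
        rw [norm_div, habsu, Real.div_sqrt]
    refine ⟨u, w / u, z, ⟨?_, habs, hz⟩, ?_, hzr⟩
    · by_cases h : w = 0
      · simp [h, hu, ← hw]
      · have hu0 : u ≠ 0 := by
          rw [hu]
          exact Complex.ofReal_ne_zero.mpr (Real.sqrt_pos.mpr (norm_pos_iff.mpr h)).ne'
        field_simp [← hw]
        exact hw
    · rw [← habs, hx]; ring
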